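/- Let F be a PS-family (equivalence class of MLL proof structures under isomorphism of unlabelled link graphs). If Θ₁ and Θ₂ are distinct MLL proof nets in F, then d_F(Θ₁, Θ₂) ≥ 2, where d_F counts the minimal number of multiplicative links at which the ⊗/⅋-labelling of Θ₁ and Θ₂ differ over all isomorphisms of their underlying graphs. -/

import Mathlib

/-- An MLL link: an ID-link (axiom link) with two conclusions,
a tensor link or a par link with two premises and one conclusion. -/
inductive MLLLink (V : Type) where
  | idl (c₁ c₂ : V)
  | tensor (a b c : V)
  | par (a b c : V)
deriving DecidableEq

namespace MLLLink
variable {V V' : Type}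

def prems : MLLLink V → List V
  | idl _ _ => []
  | tensor a b _ => [a, b]
  | par a b _ => [a, b]

def concls : MLLLink V → List V
  | idl c₁ c₂ => [c₁, c₂]
  | tensor _ _ c => [c]
  | par _ _ c => [c]

def isId : MLLLink V → Bool
  | idl _ _ => true
  | _ => false

def isTensor : MLLLink V → Bool
  | tensor _ _ _ => true
  | _ => false

def isPar : MLLLink V → Bool
  | par _ _ _ => true
  | _ => false

/-- Relabel the vertices of a link along a map. -/
def map (f : V → V') : MLLLink V → MLLLink V'
  | idl c₁ c₂ => idl (f c₁) (f c₂)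
  | tensor a b c => tensor (f a) (f b) (f c)
  | par a b c => par (f a) (f b) (f c)

/-- Forget whether a multiplicative link is ⊗ or ⅋ (normalizing ⅋ to ⊗). -/
def forget : MLLLink V → MLLLink V
  | par a b c => tensor a b c
  | L => L

end MLLLink

/-- An MLL proof structure on the set `V` of formula occurrences:
every occurrence is the conclusion of exactly one link and the premise of
at most one link, and the occurrences appearing in a link are distinct. -/
structure MLLProofStructure (V : Type) [DecidableEq V] where
  links : Finset (MLLLink V)
  concl_exists : ∀ v : V, ∃ L ∈ links, v ∈ L.concls
  concl_unique : ∀ v : V, ∀ L ∈ links, ∀ L' ∈ links,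
      v ∈ L.concls → v ∈ L'.concls → L = L'
  prem_unique : ∀ v : V, ∀ L ∈ links, ∀ L' ∈ links,
      v ∈ L.prems → v ∈ L'.prems → L = L'
  nodup : ∀ L ∈ links, (L.prems ++ L.concls).Nodup

variable {V : Type} [DecidableEq V]

/-- The edge generated by a link under a DR-switching `S`
(`S L = true` selects the left premise of a ⅋-link). -/
def switchEdge (S : MLLLink V → Bool) (L : MLLLink V) (v w : V) : Prop :=
  match L with
  | .idl c₁ c₂ => v = c₁ ∧ w = c₂
  | .tensor a b c => (v = a ∧ w = c) ∨ (v = b ∧ w = c)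
  | .par a b c =>
      (S (.par a b c) = true ∧ v = a ∧ w = c) ∨
      (S (.par a b c) = false ∧ v = b ∧ w = c)

def drRel (Θ : MLLProofStructure V) (S : MLLLink V → Bool) (v w : V) : Prop :=
  ∃ L ∈ Θ.links, switchEdge S L v w

/-- The Danos–Regnier graph of a proof structure under a switching. -/
def drGraph (Θ : MLLProofStructure V) (S : MLLLink V → Bool) : SimpleGraph V :=
  SimpleGraph.fromRel (drRel Θ S)

/-- Danos–Regnier criterion: a proof net is a proof structure all of whose
DR-graphs are acyclic and connected. -/
def IsProofNet (Θ : MLLProofStructure V) : Prop :=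
  ∀ S : MLLLink V → Bool, (drGraph Θ S).IsAcyclic ∧ (drGraph Θ S).Connected

/-- The edges from `A` down to the conclusion of the link of which `A` is a premise. -/
def belowEdges (Θ : MLLProofStructure V) (A : V) : Set (Sym2 V) :=
  {e | ∃ L ∈ Θ.links, A ∈ L.prems ∧ ∃ c ∈ L.concls, e = s(A, c)}

/-- The DR-graph with the edge below `A` deleted. -/
def empGraph (Θ : MLLProofStructure V) (S : MLLLink V → Bool) (A : V) : SimpleGraph V :=
  (drGraph Θ S).deleteEdges (belowEdges Θ A)

/-- The vertex set of `Θ_S^A`: the connected component of `A` in the DR-graph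
after deleting the edge below `A`. -/
def empComp (Θ : MLLProofStructure V) (S : MLLLink V → Bool) (A : V) : Set V :=
  {v | (empGraph Θ S A).Reachable A v}

/-- The empire of `A` in `Θ`. -/
def empire (Θ : MLLProofStructure V) (A : V) : Set V :=
  ⋂ S : MLLLink V → Bool, empComp Θ S A

/-- A conclusion of `Θ` is a formula occurrence which is a premise of no link. -/
def IsConclusion (Θ : MLLProofStructure V) (v : V) : Prop :=
  ∀ L ∈ Θ.links, v ∉ L.prems

/-- All premises and conclusions of a link lie in `X`. -/
def allIn (X : Set V) (L : MLLLink V) : Prop :=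
  (∀ w ∈ L.prems, w ∈ X) ∧ (∀ w ∈ L.concls, w ∈ X)

/-- `X` together with the links of `Θ` contained in `X` forms a proof structure. -/
def IsSubProofStructure (Θ : MLLProofStructure V) (X : Set V) : Prop :=
  ∀ v ∈ X, ∃ L ∈ Θ.links, v ∈ L.concls ∧ allIn X L

def subDrRel (Θ : MLLProofStructure V) (X : Set V) (S : MLLLink V → Bool)
    (v w : V) : Prop :=
  ∃ L ∈ Θ.links, allIn X L ∧ switchEdge S L v w

/-- The DR-graph of the substructure of `Θ` induced on `X`. -/
def subDrGraph (Θ : MLLProofStructure V) (X : Set V) (S : MLLLink V → Bool) :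
    SimpleGraph V :=
  SimpleGraph.fromRel (subDrRel Θ X S)

/-- `X` is a sub-proof net of `Θ`: it induces a proof structure whose
DR-graphs are all acyclic and connected (on `X`). -/
def IsSubProofNet (Θ : MLLProofStructure V) (X : Set V) : Prop :=
  IsSubProofStructure Θ X ∧
    ∀ S : MLLLink V → Bool, (subDrGraph Θ X S).IsAcyclic ∧
      ∀ v ∈ X, ∀ w ∈ X, (subDrGraph Θ X S).Reachable v w

/-- `A` is a conclusion of the substructure induced on `X`. -/
def IsConclusionOfSub (Θ : MLLProofStructure V) (X : Set V) (A : V) : Prop :=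
  A ∈ X ∧ ∀ L ∈ Θ.links, allIn X L → A ∉ L.prems

/-- `e` is an isomorphism of the underlying link graphs of `Θ₁` and `Θ₂`,
forgetting the ⊗/⅋ labels: they witness that `Θ₁` and `Θ₂` are in the same PS-family. -/
def FamilyIso {V₁ V₂ : Type} [DecidableEq V₁] [DecidableEq V₂]
    (Θ₁ : MLLProofStructure V₁) (Θ₂ : MLLProofStructure V₂) (e : V₁ ≃ V₂) : Prop :=
  Θ₁.links.image (fun L => (L.map e).forget) = Θ₂.links.image MLLLink.forget

/-- The number of (multiplicative) links at which the ⊗/⅋-labellings of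
`Θ₁` and `Θ₂` differ along `e`. -/
def diffCount {V₁ V₂ : Type} [DecidableEq V₁] [DecidableEq V₂]
    (Θ₁ : MLLProofStructure V₁) (Θ₂ : MLLProofStructure V₂) (e : V₁ ≃ V₂) : ℕ :=
  (Θ₁.links.filter (fun L => L.map e ∉ Θ₂.links)).card

/-! ### Auxiliary material for the proof -/

namespace MLLLink
variable {V V' : Type}

/-- Flip a multiplicative link. -/
def flipL : MLLLink V → MLLLink V
  | tensor a b c => par a b c
  | par a b c => tensor a b c
  | idl c₁ c₂ => idl c₁ c₂

lemma forget_eq_iff (M N : MLLLink V) : M.forget = N.forget ↔ M = N ∨ M = N.flipL := by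
  cases M <;> cases N <;> simp [forget, flipL]

lemma concls_flipL (N : MLLLink V) : N.flipL.concls = N.concls := by
  cases N <;> rfl

lemma exists_mem_concls (N : MLLLink V) : ∃ c, c ∈ N.concls := by
  cases N <;> simp [concls]

lemma map_prems (f : V → V') (L : MLLLink V) : (L.map f).prems = L.prems.map f := by
  cases L <;> rfl

lemma map_concls (f : V → V') (L : MLLLink V) : (L.map f).concls = L.concls.map f := by
  cases L <;> rfl

lemma map_injective {f : V → V'} (hf : Function.Injective f) :
    Function.Injective (MLLLink.map f) := by
  intro L L' h
  cases L <;> cases L' <;> simp_all [MLLLink.map, hf.eq_iff]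

end MLLLink

/-- Transport a proof structure along an equivalence of occurrence sets. -/
def mapPS {V₁ V₂ : Type} [DecidableEq V₁] [DecidableEq V₂] (e : V₁ ≃ V₂)
    (Θ : MLLProofStructure V₁) : MLLProofStructure V₂ where
  links := Θ.links.image (MLLLink.map e)
  concl_exists := by
    intro v
    obtain ⟨L, hL, hv⟩ := Θ.concl_exists (e.symm v)
    exact ⟨L.map e, Finset.mem_image_of_mem _ hL, by
      rw [MLLLink.map_concls]; exact List.mem_map.2 ⟨_, hv, e.apply_symm_apply v⟩⟩
  concl_unique := by
    intro v M hM M' hM' hv hv'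
    obtain ⟨L, hL, rfl⟩ := Finset.mem_image.1 hM
    obtain ⟨L', hL', rfl⟩ := Finset.mem_image.1 hM'
    rw [MLLLink.map_concls, List.mem_map] at hv hv'
    obtain ⟨u, hu, rfl⟩ := hv
    obtain ⟨u', hu', huu⟩ := hv'
    rw [show u' = u from e.injective huu] at hu'
    exact congrArg _ (Θ.concl_unique u L hL L' hL' hu hu')
  prem_unique := by
    intro v M hM M' hM' hv hv'
    obtain ⟨L, hL, rfl⟩ := Finset.mem_image.1 hM
    obtain ⟨L', hL', rfl⟩ := Finset.mem_image.1 hM'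
    rw [MLLLink.map_prems, List.mem_map] at hv hv'
    obtain ⟨u, hu, rfl⟩ := hv
    obtain ⟨u', hu', huu⟩ := hv'
    rw [show u' = u from e.injective huu] at hu'
    exact congrArg _ (Θ.prem_unique u L hL L' hL' hu hu')
  nodup := by
    intro M hM
    obtain ⟨L, hL, rfl⟩ := Finset.mem_image.1 hM
    rw [MLLLink.map_prems, MLLLink.map_concls, ← List.map_append]
    exact (Θ.nodup L hL).map e.injective

lemma switchEdge_map {V₁ V₂ : Type} (e : V₁ ≃ V₂) (S : MLLLink V₂ → Bool)
    (L : MLLLink V₁) (v w : V₁) :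
    switchEdge S (L.map e) (e v) (e w) ↔ switchEdge (fun K => S (K.map e)) L v w := by
  cases L <;> simp [switchEdge, MLLLink.map]

lemma drRel_mapPS {V₁ V₂ : Type} [DecidableEq V₁] [DecidableEq V₂] (e : V₁ ≃ V₂)
    (Θ : MLLProofStructure V₁) (S : MLLLink V₂ → Bool) (v w : V₁) :
    drRel (mapPS e Θ) S (e v) (e w) ↔ drRel Θ (fun K => S (K.map e)) v w := by
  constructor
  · rintro ⟨M, hM, hsw⟩
    obtain ⟨L, hL, rfl⟩ := Finset.mem_image.1 hM
    exact ⟨L, hL, (switchEdge_map e S L v w).1 hsw⟩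
  · rintro ⟨L, hL, hsw⟩
    exact ⟨L.map e, Finset.mem_image_of_mem _ hL, (switchEdge_map e S L v w).2 hsw⟩

/-- The DR-graphs of a transported structure are isomorphic to those of the original. -/
def mapIso {V₁ V₂ : Type} [DecidableEq V₁] [DecidableEq V₂] (e : V₁ ≃ V₂)
    (Θ : MLLProofStructure V₁) (S : MLLLink V₂ → Bool) :
    drGraph Θ (fun K => S (K.map e)) ≃g drGraph (mapPS e Θ) S where
  toEquiv := e
  map_rel_iff' := by
    intro u v
    simp only [drGraph, SimpleGraph.fromRel_adj, Equiv.coe_fn_mk,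
      drRel_mapPS, ne_eq, EmbeddingLike.apply_eq_iff_eq]

lemma mapPS_net {V₁ V₂ : Type} [DecidableEq V₁] [DecidableEq V₂] (e : V₁ ≃ V₂)
    (Θ : MLLProofStructure V₁) (h : IsProofNet Θ) : IsProofNet (mapPS e Θ) := by
  intro S
  obtain ⟨hac, hconn⟩ := h (fun K => S (K.map e))
  let iso := mapIso e Θ S
  refine ⟨?_, iso.connected_iff.mp hconn⟩
  intro v cyc hcyc
  exact hac (cyc.map iso.symm.toHom)
    ((SimpleGraph.Walk.map_isCycle_iff_of_injective iso.symm.toEquiv.injective).2 hcyc)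

/-- Core lemma: a proof structure with a ⅋-link and the same structure with that
link turned into a ⊗-link cannot both be proof nets. -/
lemma flip_not_net {V : Type} [DecidableEq V] (Θ Θ' : MLLProofStructure V) (a b c : V)
    (hp : MLLLink.par a b c ∈ Θ.links) (ht : MLLLink.tensor a b c ∈ Θ'.links)
    (hrest : Θ.links.erase (MLLLink.par a b c) = Θ'.links.erase (MLLLink.tensor a b c))
    (hΘ : IsProofNet Θ) (hΘ' : IsProofNet Θ') : False := by
  have hnd := Θ'.nodup _ ht
  simp [MLLLink.prems, MLLLink.concls] at hnd
  obtain ⟨⟨hab, hac⟩, hbc⟩ := hnd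
  -- membership transfer for links other than the flipped one
  have hmem : ∀ M : MLLLink V, M ∈ Θ.links → M ≠ .par a b c → M ∈ Θ'.links := by
    intro M hM hne
    have : M ∈ Θ'.links.erase (.tensor a b c) := hrest ▸ Finset.mem_erase.2 ⟨hne, hM⟩
    exact (Finset.mem_erase.1 this).2
  -- the par-graphs are subgraphs of the tensor-graphs
  have hle : ∀ S, drGraph Θ S ≤ drGraph Θ' S := by
    intro S v w hvw
    rw [drGraph, SimpleGraph.fromRel_adj] at hvw ⊢
    refine ⟨hvw.1, ?_⟩
    have key : ∀ x y, drRel Θ S x y → drRel Θ' S x y := by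
      rintro x y ⟨L, hL, hsw⟩
      by_cases hLp : L = .par a b c
      · subst hLp
        refine ⟨.tensor a b c, ht, ?_⟩
        rcases hsw with ⟨_, rfl, rfl⟩ | ⟨_, rfl, rfl⟩
        · exact Or.inl ⟨rfl, rfl⟩
        · exact Or.inr ⟨rfl, rfl⟩
      · exact ⟨L, hmem L hL hLp, hsw⟩
    rcases hvw.2 with h | h
    · exact Or.inl (key _ _ h)
    · exact Or.inr (key _ _ h)
  -- both tensor edges are present in every DR-graph of Θ'
  have hadj' : ∀ (S : MLLLink V → Bool) (x : V), x = a ∨ x = b → (drGraph Θ' S).Adj x c := by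
    intro S x hx
    rw [drGraph, SimpleGraph.fromRel_adj]
    refine ⟨by rcases hx with rfl | rfl; exact hac; exact hbc,
      Or.inl ⟨.tensor a b c, ht, ?_⟩⟩
    rcases hx with rfl | rfl
    · exact Or.inl ⟨rfl, rfl⟩
    · exact Or.inr ⟨rfl, rfl⟩
  -- bridge argument: the edge x–c must also be present in the Θ-graph
  have bridge : ∀ (S : MLLLink V → Bool) (x : V), x = a ∨ x = b →
      ¬ (drGraph Θ S).Adj x c → False := by
    intro S x hx hnadj
    have hbr := (SimpleGraph.isAcyclic_iff_forall_adj_isBridge.mp (hΘ' S).1) (hadj' S x hx)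
    rw [SimpleGraph.isBridge_iff] at hbr
    apply hbr
    have hreach : (drGraph Θ S).Reachable x c := (hΘ S).2.preconnected x c
    refine hreach.mono ?_
    intro u v huv
    simp only [SimpleGraph.deleteEdges, SimpleGraph.sdiff_adj, SimpleGraph.fromEdgeSet_adj, Set.mem_singleton_iff]
    refine ⟨hle S huv, ?_⟩
    rintro ⟨heq, -⟩
    rw [Sym2.eq_iff] at heq
    rcases heq with ⟨rfl, rfl⟩ | ⟨rfl, rfl⟩
    · exact hnadj huv
    · exact hnadj huv.symm
  -- analysis of an edge x–c in a DR-graph of Θ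
  have analyze : ∀ (S : MLLLink V → Bool) (x : V), ∀ L ∈ Θ.links,
      (switchEdge S L x c ∨ switchEdge S L c x) →
      (c ∈ L.prems ∧ x ∈ L.concls) ∨ L = .par a b c := by
    intro S x L hL hsw
    by_cases hLp : L = .par a b c
    · exact Or.inr hLp
    left
    have hnc : c ∉ L.concls := fun hcC =>
      hLp (Θ.concl_unique c L hL _ hp hcC (by simp [MLLLink.concls]))
    cases L with
    | idl c₁ c₂ =>
        rcases hsw with ⟨rfl, rfl⟩ | ⟨rfl, rfl⟩
        · exact absurd (by simp [MLLLink.concls]) hnc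
        · exact absurd (by simp [MLLLink.concls]) hnc
    | tensor p q r =>
        rcases hsw with (⟨rfl, rfl⟩ | ⟨rfl, rfl⟩) | (⟨rfl, rfl⟩ | ⟨rfl, rfl⟩)
        · exact absurd (by simp [MLLLink.concls]) hnc
        · exact absurd (by simp [MLLLink.concls]) hnc
        · exact ⟨by simp [MLLLink.prems], by simp [MLLLink.concls]⟩
        · exact ⟨by simp [MLLLink.prems], by simp [MLLLink.concls]⟩
    | par p q r =>
        rcases hsw with (⟨hS, rfl, rfl⟩ | ⟨hS, rfl, rfl⟩) | (⟨hS, rfl, rfl⟩ | ⟨hS, rfl, rfl⟩)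
        · exact absurd (by simp [MLLLink.concls]) hnc
        · exact absurd (by simp [MLLLink.concls]) hnc
        · exact ⟨by simp [MLLLink.prems], by simp [MLLLink.concls]⟩
        · exact ⟨by simp [MLLLink.prems], by simp [MLLLink.concls]⟩
  -- now the main case analysis
  have hST : (drGraph Θ (fun _ => true)).Adj b c := by
    by_contra hnadj
    exact bridge _ b (Or.inr rfl) hnadj
  have hSF : (drGraph Θ (fun M => if M = MLLLink.par a b c then false else true)).Adj a c := by
    by_contra hnadj
    exact bridge _ a (Or.inl rfl) hnadj
  -- extract the links responsible for the two edges
  rw [drGraph, SimpleGraph.fromRel_adj] at hST hSF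
  obtain ⟨-, hrelb⟩ := hST
  obtain ⟨-, hrela⟩ := hSF
  have hMb : ∃ M ∈ Θ.links, c ∈ M.prems ∧ b ∈ M.concls := by
    have : ∃ L ∈ Θ.links, switchEdge (fun _ => true) L b c ∨ switchEdge (fun _ => true) L c b := by
      rcases hrelb with ⟨L, hL, h⟩ | ⟨L, hL, h⟩
      · exact ⟨L, hL, Or.inl h⟩
      · exact ⟨L, hL, Or.inr h⟩
    obtain ⟨L, hL, hsw⟩ := this
    rcases analyze _ b L hL hsw with h | rfl
    · exact ⟨L, hL, h⟩
    · rcases hsw with (⟨-, h1, -⟩ | ⟨h0, -⟩) | (⟨-, h1, -⟩ | ⟨-, -, h1⟩)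
      · exact absurd h1.symm hab
      · simp at h0
      · exact absurd h1.symm hac
      · exact absurd h1 hbc
  have hMa : ∃ M ∈ Θ.links, c ∈ M.prems ∧ a ∈ M.concls := by
    have : ∃ L ∈ Θ.links,
        switchEdge (fun M => if M = MLLLink.par a b c then false else true) L a c ∨
        switchEdge (fun M => if M = MLLLink.par a b c then false else true) L c a := by
      rcases hrela with ⟨L, hL, h⟩ | ⟨L, hL, h⟩
      · exact ⟨L, hL, Or.inl h⟩
      · exact ⟨L, hL, Or.inr h⟩
    obtain ⟨L, hL, hsw⟩ := this
    rcases analyze _ a L hL hsw with h | rfl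
    · exact ⟨L, hL, h⟩
    · rcases hsw with (⟨h0, -⟩ | ⟨-, h1, -⟩) | (⟨-, h1, -⟩ | ⟨-, h1, -⟩)
      · simp at h0
      · exact absurd h1 hab
      · exact absurd h1.symm hac
      · exact absurd h1.symm hbc
  obtain ⟨M, hM, hcM, hbM⟩ := hMb
  obtain ⟨M', hM', hcM', haM'⟩ := hMa
  have hMM : M = M' := Θ.prem_unique c M hM M' hM' hcM hcM'
  subst hMM
  cases M with
  | idl c₁ c₂ => simp [MLLLink.prems] at hcM
  | tensor p q r =>
      simp [MLLLink.concls] at hbM haM'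
      exact hab (haM'.trans hbM.symm)
  | par p q r =>
      simp [MLLLink.concls] at hbM haM'
      exact hab (haM'.trans hbM.symm)

/-- From a single label mismatch, the rest of the two structures agree. -/
lemma key_erase {V₁ V₂ : Type} [DecidableEq V₁] [DecidableEq V₂]
    (Θ₁ : MLLProofStructure V₁) (Θ₂ : MLLProofStructure V₂) (e : V₁ ≃ V₂)
    (hiso : FamilyIso Θ₁ Θ₂ e) (L₀ : MLLLink V₁) (hL₀ : L₀ ∈ Θ₁.links)
    (hout : L₀.map e ∉ Θ₂.links)
    (honly : ∀ L ∈ Θ₁.links, L.map e ∉ Θ₂.links → L = L₀)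
    (M : MLLLink V₂) (hM : M ∈ Θ₂.links) (hMf : M.forget = (L₀.map e).forget) :
    (mapPS e Θ₁).links.erase (L₀.map e) = Θ₂.links.erase M := by
  have hPS : ∀ L ∈ Θ₁.links, L.map e ∈ (mapPS e Θ₁).links := fun L hL =>
    Finset.mem_image_of_mem _ hL
  ext N
  simp only [Finset.mem_erase]
  constructor
  · rintro ⟨hNne, hN⟩
    obtain ⟨L, hL, rfl⟩ := Finset.mem_image.1 hN
    have hLne : L ≠ L₀ := fun h => hNne (by rw [h])
    have hNin : L.map e ∈ Θ₂.links := by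
      by_contra hcon
      exact hLne (honly L hL hcon)
    refine ⟨?_, hNin⟩
    rintro rfl
    -- L.map e = M, so it is a flip of L₀.map e, same conclusions: contradiction
    have : (L.map e).forget = (L₀.map e).forget := hMf
    rcases (MLLLink.forget_eq_iff _ _).1 this with h | h
    · exact hNne h
    · obtain ⟨c, hc⟩ := MLLLink.exists_mem_concls (L₀.map e)
      have hc' : c ∈ (L.map e).concls := by rw [h, MLLLink.concls_flipL]; exact hc
      exact hNne ((mapPS e Θ₁).concl_unique c _ (hPS L hL) _ (hPS L₀ hL₀) hc' hc)
  · rintro ⟨hNM, hN⟩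
    have hMform : M = (L₀.map e).flipL := by
      rcases (MLLLink.forget_eq_iff _ _).1 hMf with h | h
      · exact absurd (h ▸ hM) hout
      · exact h
    have : N.forget ∈ Θ₂.links.image MLLLink.forget := Finset.mem_image_of_mem _ hN
    rw [← hiso] at this
    obtain ⟨L, hL, hLf⟩ := Finset.mem_image.1 this
    by_cases hNL : N = L.map e
    · subst hNL
      have hLne : L ≠ L₀ := by
        rintro rfl
        exact hout hN
      refine ⟨?_, Finset.mem_image_of_mem _ hL⟩
      intro h
      exact hLne (MLLLink.map_injective e.injective h)
    · rcases (MLLLink.forget_eq_iff N (L.map e)).1 hLf.symm with h | h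
      · exact absurd h hNL
      · by_cases hLL₀ : L = L₀
        · subst hLL₀
          exact absurd (h.trans hMform.symm) hNM
        · have hLin : L.map e ∈ Θ₂.links := by
            by_contra hcon
            exact hLL₀ (honly L hL hcon)
          obtain ⟨c, hc⟩ := MLLLink.exists_mem_concls (L.map e)
          have hc' : c ∈ N.concls := by rw [h, MLLLink.concls_flipL]; exact hc
          exact absurd (Θ₂.concl_unique c N hN _ hLin hc' hc) hNL


/-- One-error-detection: two distinct MLL proof nets in the same PS-family are
at distance at least 2, i.e. every isomorphism of their underlying unlabelled
link graphs exhibits at least two ⊗/⅋-label mismatches. -/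
theorem proofnets_distance_ge_two {V₁ V₂ : Type} [DecidableEq V₁] [DecidableEq V₂]
    (Θ₁ : MLLProofStructure V₁) (Θ₂ : MLLProofStructure V₂)
    (h₁ : IsProofNet Θ₁) (h₂ : IsProofNet Θ₂)
    (hfam : ∃ e : V₁ ≃ V₂, FamilyIso Θ₁ Θ₂ e)
    (hne : ¬ ∃ e : V₁ ≃ V₂, FamilyIso Θ₁ Θ₂ e ∧ diffCount Θ₁ Θ₂ e = 0) :
    ∀ e : V₁ ≃ V₂, FamilyIso Θ₁ Θ₂ e → 2 ≤ diffCount Θ₁ Θ₂ e := by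
  intro e he
  by_contra hlt
  push_neg at hlt
  have h0 : diffCount Θ₁ Θ₂ e ≠ 0 := fun h => hne ⟨e, he, h⟩
  have h1 : diffCount Θ₁ Θ₂ e = 1 := by omega
  rw [diffCount, Finset.card_eq_one] at h1
  obtain ⟨L₀, hD⟩ := h1
  have hL₀mem : L₀ ∈ Θ₁.links ∧ L₀.map e ∉ Θ₂.links := by
    have := hD ▸ Finset.mem_singleton_self L₀
    simpa [Finset.mem_filter] using this
  have honly : ∀ L ∈ Θ₁.links, L.map e ∉ Θ₂.links → L = L₀ := by
    intro L hL hnot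
    have : L ∈ Θ₁.links.filter (fun L => L.map e ∉ Θ₂.links) :=
      Finset.mem_filter.2 ⟨hL, by simpa using hnot⟩
    rw [hD, Finset.mem_singleton] at this
    exact this
  have hMex : (L₀.map e).forget ∈ Θ₂.links.image MLLLink.forget := by
    rw [← he]
    exact Finset.mem_image_of_mem _ hL₀mem.1
  obtain ⟨M, hM, hMf⟩ := Finset.mem_image.1 hMex
  have hMflip : M = (L₀.map e).flipL := by
    rcases (MLLLink.forget_eq_iff _ _).1 hMf with h | h
    · exact absurd (h ▸ hM) hL₀mem.2
    · exact h
  have herase := key_erase Θ₁ Θ₂ e he L₀ hL₀mem.1 hL₀mem.2 honly M hM hMf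
  have hΨnet : IsProofNet (mapPS e Θ₁) := mapPS_net e Θ₁ h₁
  have hΨmem : L₀.map e ∈ (mapPS e Θ₁).links := Finset.mem_image_of_mem _ hL₀mem.1
  cases hform : L₀.map e with
  | idl c₁ c₂ =>
      rw [hform] at hMflip
      simp only [MLLLink.flipL] at hMflip
      subst hMflip
      exact hL₀mem.2 (by rw [hform]; exact hM)
  | tensor a b c =>
      rw [hform] at hMflip herase hΨmem
      simp only [MLLLink.flipL] at hMflip
      subst hMflip
      exact flip_not_net Θ₂ (mapPS e Θ₁) a b c hM hΨmem herase.symm h₂ hΨnet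
  | par a b c =>
      rw [hform] at hMflip herase hΨmem
      simp only [MLLLink.flipL] at hMflip
      subst hMflip
      exact flip_not_net (mapPS e Θ₁) Θ₂ a b c hΨmem hM herase hΨnet h₂
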